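/- arXiv:2309.01898 — 3 statements merged into one kernel-verified Lean document; each statement's English description precedes it below -/
import Mathlib

section
/- On the region where v ≠ 0 and ‖p‖ > r > 0, the gradient of the collision cone CBF h(p,v) = ⟨p,v⟩ + ‖v‖√(‖p‖²−r²) with respect to v is nonzero; hence the row vector L_g h = (−∂h/∂v₁, −∂h/∂v₂) is nonzero. -/
open scoped RealInnerProductSpace

theorem stmt_4 (p v : EuclideanSpace ℝ (Fin 2)) (hv : v ≠ 0)
    (r : ℝ) (hr : 0 < r) (hpr : r < ‖p‖) :
    HasGradientAt (fun w : EuclideanSpace ℝ (Fin 2) => ⟪p, w⟫ + ‖w‖ * Real.sqrt (‖p‖ ^ 2 - r ^ 2))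
      (p + (Real.sqrt (‖p‖ ^ 2 - r ^ 2) / ‖v‖) • v) v ∧
    p + (Real.sqrt (‖p‖ ^ 2 - r ^ 2) / ‖v‖) • v ≠ 0 := by
  set c := Real.sqrt (‖p‖ ^ 2 - r ^ 2) with hc
  have hvn : ‖v‖ ≠ 0 := norm_ne_zero_iff.mpr hv
  have hvpos : (0:ℝ) < ‖v‖ := norm_pos_iff.mpr hv
  have hc0 : 0 ≤ c := Real.sqrt_nonneg _
  have hppos : (0:ℝ) < ‖p‖ := hr.trans hpr
  have hclt : c < ‖p‖ := by
    rw [hc]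
    calc Real.sqrt (‖p‖ ^ 2 - r ^ 2) < Real.sqrt (‖p‖ ^ 2) := by
          apply Real.sqrt_lt_sqrt (by nlinarith); nlinarith
      _ = ‖p‖ := by rw [Real.sqrt_sq hppos.le]
  constructor
  · rw [hasGradientAt_iff_hasFDerivAt]
    have hsq : HasFDerivAt (fun w : EuclideanSpace ℝ (Fin 2) => ‖w‖ ^ 2)
        (2 • (innerSL ℝ v : EuclideanSpace ℝ (Fin 2) →L[ℝ] ℝ)) v := by
      simpa using (hasFDerivAt_id v).norm_sq
    have hnsq : ‖v‖ ^ 2 ≠ 0 := pow_ne_zero _ hvn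
    have hnorm : HasFDerivAt (fun w : EuclideanSpace ℝ (Fin 2) => ‖w‖)
        ((1 / (2 * ‖v‖)) • (2 • (innerSL ℝ v : EuclideanSpace ℝ (Fin 2) →L[ℝ] ℝ))) v := by
      have := hsq.sqrt hnsq
      simp only [Real.sqrt_sq (norm_nonneg _)] at this
      exact this
    have h1 : HasFDerivAt (fun w : EuclideanSpace ℝ (Fin 2) => ⟪p, w⟫ + ‖w‖ * c)
        ((innerSL ℝ p : EuclideanSpace ℝ (Fin 2) →L[ℝ] ℝ) +
          c • ((1 / (2 * ‖v‖)) • (2 • (innerSL ℝ v : EuclideanSpace ℝ (Fin 2) →L[ℝ] ℝ)))) v :=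
      (innerSL ℝ p).hasFDerivAt.add (hnorm.mul_const c)
    refine h1.congr_fderiv ?_
    ext w
    simp [inner_add_left, inner_smul_left, real_inner_comm]
    field_simp
  · intro h
    have h1 : ⟪p, p + (c / ‖v‖) • v⟫ = 0 := by rw [h, inner_zero_right]
    rw [inner_add_right, inner_smul_right, real_inner_self_eq_norm_sq] at h1
    have hcs : |⟪p, v⟫| ≤ ‖p‖ * ‖v‖ := abs_real_inner_le_norm p v
    have : c / ‖v‖ * ⟪p, v⟫ ≥ -(c * ‖p‖) := by
      have h2 : ⟪p, v⟫ ≥ -(‖p‖ * ‖v‖) := by linarith [abs_le.mp hcs]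
      rw [ge_iff_le, div_mul_eq_mul_div, le_div_iff₀ hvpos]
      nlinarith
    nlinarith
end

section
/- For p, v ∈ ℝ² with v ≠ 0 and ‖p‖ > r > 0: if h(p,v) = ⟨p,v⟩ + ‖v‖√(‖p‖²−r²) > 0 and ⟨p,v⟩ < 0, then the perpendicular distance from the origin to the line {p + t v : t ∈ ℝ} exceeds r; i.e., the relative trajectory ray misses the disc of radius r centered at the origin. -/
open scoped RealInnerProductSpace

theorem stmt_15 (p v : EuclideanSpace ℝ (Fin 2)) (hv : v ≠ 0)
    (r : ℝ) (hr : 0 < r) (hpr : r < ‖p‖)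
    (hh : 0 < ⟪p, v⟫ + ‖v‖ * Real.sqrt (‖p‖ ^ 2 - r ^ 2))
    (hpv : ⟪p, v⟫ < 0) :
    r < |p 0 * v 1 - p 1 * v 0| / ‖v‖ := by
  have hvpos : 0 < ‖v‖ := norm_pos_iff.mpr hv
  have hsub : (0:ℝ) ≤ ‖p‖ ^ 2 - r ^ 2 := by nlinarith [hr.le]
  have hsq : Real.sqrt (‖p‖ ^ 2 - r ^ 2) ^ 2 = ‖p‖ ^ 2 - r ^ 2 := Real.sq_sqrt hsub
  have ha : ⟪p, v⟫ ^ 2 < ‖v‖ ^ 2 * (‖p‖ ^ 2 - r ^ 2) := by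
    have h1 : -⟪p, v⟫ < ‖v‖ * Real.sqrt (‖p‖ ^ 2 - r ^ 2) := by linarith
    nlinarith [Real.sqrt_nonneg (‖p‖ ^ 2 - r ^ 2), hvpos]
  have hip : ⟪p, v⟫ = p 0 * v 0 + p 1 * v 1 := by
    simp [PiLp.inner_apply, Fin.sum_univ_two, mul_comm]
  have hnp : ‖p‖ ^ 2 = p 0 ^ 2 + p 1 ^ 2 := by
    rw [EuclideanSpace.norm_eq, Real.sq_sqrt (by positivity)]
    simp [Fin.sum_univ_two]
  have hnv : ‖v‖ ^ 2 = v 0 ^ 2 + v 1 ^ 2 := by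
    rw [EuclideanSpace.norm_eq, Real.sq_sqrt (by positivity)]
    simp [Fin.sum_univ_two]
  have hcross : r * ‖v‖ < |p 0 * v 1 - p 1 * v 0| := by
    have h2 : (r * ‖v‖) ^ 2 < (p 0 * v 1 - p 1 * v 0) ^ 2 := by nlinarith
    nlinarith [abs_nonneg (p 0 * v 1 - p 1 * v 0), sq_abs (p 0 * v 1 - p 1 * v 0),
      mul_pos hr hvpos]
  rw [lt_div_iff₀ hvpos]
  exact hcross
end

section
/- Conversely, if the relative velocity v points inside the collision cone, i.e., ⟨p,v⟩ < 0 and the distance from the origin to the line {p + tv} is less than r (with ‖p‖ > r), then h(p,v) = ⟨p,v⟩ + ‖v‖√(‖p‖²−r²) < 0. -/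
open scoped RealInnerProductSpace

theorem stmt_16 (p v : EuclideanSpace ℝ (Fin 2)) (hv : v ≠ 0)
    (r : ℝ) (hr : 0 < r) (hpr : r < ‖p‖)
    (hpv : ⟪p, v⟫ < 0)
    (hdist : |p 0 * v 1 - p 1 * v 0| / ‖v‖ < r) :
    ⟪p, v⟫ + ‖v‖ * Real.sqrt (‖p‖ ^ 2 - r ^ 2) < 0 := by
  have hv' : 0 < ‖v‖ := norm_pos_iff.mpr hv
  have hA : 0 ≤ ‖p‖ ^ 2 - r ^ 2 := by nlinarith
  have hs : Real.sqrt (‖p‖ ^ 2 - r ^ 2) ^ 2 = ‖p‖ ^ 2 - r ^ 2 := Real.sq_sqrt hA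
  have hcross : |p 0 * v 1 - p 1 * v 0| < r * ‖v‖ := by
    rwa [div_lt_iff₀ hv'] at hdist
  have hcross2 : (p 0 * v 1 - p 1 * v 0) ^ 2 < r ^ 2 * ‖v‖ ^ 2 := by
    have := abs_nonneg (p 0 * v 1 - p 1 * v 0)
    nlinarith [sq_abs (p 0 * v 1 - p 1 * v 0)]
  have hip : ⟪p, v⟫ = p 0 * v 0 + p 1 * v 1 := by
    simp [PiLp.inner_apply, Fin.sum_univ_two, RCLike.inner_apply]; ring
  have hnp : ‖p‖ ^ 2 = p 0 ^ 2 + p 1 ^ 2 := by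
    rw [EuclideanSpace.norm_eq, Real.sq_sqrt (by positivity)]
    simp [Fin.sum_univ_two, sq_abs]
  have hnv : ‖v‖ ^ 2 = v 0 ^ 2 + v 1 ^ 2 := by
    rw [EuclideanSpace.norm_eq, Real.sq_sqrt (by positivity)]
    simp [Fin.sum_univ_two, sq_abs]
  have key : ‖v‖ * Real.sqrt (‖p‖ ^ 2 - r ^ 2) < -⟪p, v⟫ := by
    have h1 : (‖v‖ * Real.sqrt (‖p‖ ^ 2 - r ^ 2)) ^ 2 < (-⟪p, v⟫) ^ 2 := by
      have : ⟪p, v⟫ ^ 2 + (p 0 * v 1 - p 1 * v 0) ^ 2 = ‖p‖ ^ 2 * ‖v‖ ^ 2 := by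
        rw [hip, hnp, hnv]; ring
      nlinarith [Real.sqrt_nonneg (‖p‖ ^ 2 - r ^ 2)]
    exact lt_of_pow_lt_pow_left₀ 2 (by linarith) h1
  linarith
end
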